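/- Multivariate delta method: let θ ∈ R^q, let (X_n) be a sequence of R^q-valued random vectors such that √n (X_n − θ) converges in distribution to the centered Gaussian distribution on R^q with covariance matrix Σ, and let φ : R^q → R be continuously differentiable in a neighbourhood of θ with gradient V = ∇φ(θ). Then √n ( φ(X_n) − φ(θ) ) converges in distribution to the centered normal distribution on R with variance V^T Σ V. -/

import Mathlib

open MeasureTheory ProbabilityTheory Filter

open Topology

lemma gauss_atom (v : NNReal) {x : ℝ} (hx : x ≠ 0) : gaussianReal 0 v {x} = 0 := by
  by_cases hv : v = 0
  · subst hv
    rw [gaussianReal_zero_var]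
    simp [Ne.symm hx]
  · rw [gaussianReal_of_var_ne_zero 0 hv]
    exact (withDensity_absolutelyContinuous _ _) (measure_singleton x)

lemma toReal_meas_le_add {Ω : Type*} [MeasurableSpace Ω] (P : Measure Ω) [IsFiniteMeasure P]
    {A B C : Set Ω} (h : A ⊆ B ∪ C) : (P A).toReal ≤ (P B).toReal + (P C).toReal := by
  have h1 : P A ≤ P B + P C := (measure_mono h).trans (measure_union_le _ _)
  have h2 := ENNReal.toReal_mono
    (ENNReal.add_ne_top.2 ⟨measure_ne_top _ _, measure_ne_top _ _⟩) h1
  rwa [ENNReal.toReal_add (measure_ne_top _ _) (measure_ne_top _ _)] at h2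

lemma cdf_cont (μ : Measure ℝ) [IsProbabilityMeasure μ] {t : ℝ} (ht : μ {t} = 0)
    {ε : ℝ} (hε : 0 < ε) :
    ∃ η > 0, (μ (Set.Iic (t + η))).toReal ≤ (μ (Set.Iic t)).toReal + ε ∧
      (μ (Set.Iic t)).toReal ≤ (μ (Set.Iic (t - η))).toReal + ε := by
  -- right continuity
  have hr : Tendsto (fun n : ℕ => (μ (Set.Iic (t + ((n : ℝ) + 1)⁻¹))).toReal) atTop
      (𝓝 (μ (Set.Iic t)).toReal) := by
    have hinter : ⋂ n : ℕ, Set.Iic (t + ((n : ℝ) + 1)⁻¹) = Set.Iic t := by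
      ext x
      simp only [Set.mem_iInter, Set.mem_Iic]
      constructor
      · intro h
        have htt : Tendsto (fun n : ℕ => t + ((n : ℝ) + 1)⁻¹) atTop (𝓝 t) := by
          have := tendsto_one_div_add_atTop_nhds_zero_nat (𝕜 := ℝ)
          simpa [one_div] using (tendsto_const_nhds (x := t)).add this
        exact ge_of_tendsto' htt h
      · intro h n
        have : (0:ℝ) ≤ ((n : ℝ) + 1)⁻¹ := by positivity
        linarith
    have := tendsto_measure_iInter_atTop (μ := μ)
      (s := fun n : ℕ => Set.Iic (t + ((n : ℝ) + 1)⁻¹))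
      (fun n => measurableSet_Iic.nullMeasurableSet)
      (fun a b hab => Set.Iic_subset_Iic.2 (by
        have : ((b : ℝ) + 1)⁻¹ ≤ ((a : ℝ) + 1)⁻¹ := by
          apply inv_anti₀ (by positivity)
          have := (Nat.cast_le (α := ℝ)).2 hab
          linarith
        linarith))
      ⟨0, measure_ne_top _ _⟩
    rw [hinter] at this
    exact (ENNReal.tendsto_toReal_iff (fun n => measure_ne_top _ _)
      (measure_ne_top _ _)).2 this
  -- left side
  have hl : Tendsto (fun n : ℕ => (μ (Set.Ioc (t - ((n : ℝ) + 1)⁻¹) t)).toReal) atTop (𝓝 0) := by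
    have hinter : ⋂ n : ℕ, Set.Ioc (t - ((n : ℝ) + 1)⁻¹) t = {t} := by
      ext x
      simp only [Set.mem_iInter, Set.mem_Ioc, Set.mem_singleton_iff]
      constructor
      · intro h
        have htt : Tendsto (fun n : ℕ => t - ((n : ℝ) + 1)⁻¹) atTop (𝓝 t) := by
          have := tendsto_one_div_add_atTop_nhds_zero_nat (𝕜 := ℝ)
          simpa [one_div] using (tendsto_const_nhds (x := t)).sub this
        have h1 : t ≤ x := le_of_tendsto htt (Eventually.of_forall fun n => (h n).1.le)
        exact le_antisymm ((h 0).2) h1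
      · rintro rfl n
        refine ⟨by simp [sub_lt_self_iff]; positivity, le_rfl⟩
    have := tendsto_measure_iInter_atTop (μ := μ)
      (s := fun n : ℕ => Set.Ioc (t - ((n : ℝ) + 1)⁻¹) t)
      (fun n => measurableSet_Ioc.nullMeasurableSet)
      (fun a b hab => Set.Ioc_subset_Ioc_left (by
        have : ((b : ℝ) + 1)⁻¹ ≤ ((a : ℝ) + 1)⁻¹ := by
          apply inv_anti₀ (by positivity)
          have := (Nat.cast_le (α := ℝ)).2 hab
          linarith
        linarith))
      ⟨0, measure_ne_top _ _⟩
    rw [hinter, ht] at this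
    have := (ENNReal.tendsto_toReal_iff (fun n => measure_ne_top _ _)
      (by simp : (0:ENNReal) ≠ ⊤)).2 this
    simpa using this
  obtain ⟨n₁, hn₁⟩ := (Metric.tendsto_atTop.1 hr ε hε)
  obtain ⟨n₂, hn₂⟩ := (Metric.tendsto_atTop.1 hl ε hε)
  set n := max n₁ n₂
  refine ⟨((n : ℝ) + 1)⁻¹, by positivity, ?_, ?_⟩
  · have := hn₁ n (le_max_left _ _)
    rw [Real.dist_eq, abs_sub_lt_iff] at this
    linarith [this.1]
  · have := hn₂ n (le_max_right _ _)
    rw [Real.dist_eq, abs_sub_lt_iff] at this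
    have hsplit : (μ (Set.Iic t)).toReal
        = (μ (Set.Iic (t - ((n:ℝ)+1)⁻¹))).toReal + (μ (Set.Ioc (t - ((n:ℝ)+1)⁻¹) t)).toReal := by
      rw [← ENNReal.toReal_add (measure_ne_top _ _) (measure_ne_top _ _),
        ← measure_union (Set.Iic_disjoint_Ioc le_rfl) measurableSet_Ioc,
        Set.Iic_union_Ioc_eq_Iic (by linarith [inv_nonneg.2 (by positivity : (0:ℝ) ≤ (n:ℝ)+1)])]
    have h0 : (μ (Set.Ioc (t - ((n:ℝ)+1)⁻¹) t)).toReal < ε := by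
      simpa using this.1
    linarith

lemma toReal_meas_iUnion2_le {Ω : Type*} [MeasurableSpace Ω] (P : Measure Ω) [IsFiniteMeasure P]
    {ι : Type*} [Fintype ι] (A B : ι → Set Ω) :
    (P (⋃ i, A i ∪ B i)).toReal ≤ ∑ i, ((P (A i)).toReal + (P (B i)).toReal) := by
  have h1 : P (⋃ i, A i ∪ B i) ≤ ∑ i, (P (A i) + P (B i)) :=
    (measure_iUnion_fintype_le _ _).trans (Finset.sum_le_sum fun i _ => measure_union_le _ _)
  have hne : ∀ i ∈ Finset.univ (α := ι), P (A i) + P (B i) ≠ ⊤ :=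
    fun i _ => ENNReal.add_ne_top.2 ⟨measure_ne_top _ _, measure_ne_top _ _⟩
  have h2 := ENNReal.toReal_mono (by
    rw [← lt_top_iff_ne_top]
    exact ENNReal.sum_lt_top.2 fun i hi => lt_top_iff_ne_top.2 (hne i hi)) h1
  rw [ENNReal.toReal_sum hne] at h2
  refine h2.trans (le_of_eq ?_)
  exact Finset.sum_congr rfl fun i _ =>
    ENNReal.toReal_add (measure_ne_top _ _) (measure_ne_top _ _)

/-- **Multivariate delta method.**
Let `θ ∈ ℝ^q` and `(X_n)` be random vectors with `√n (X_n - θ) →ᵈ N(0, Σ)`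
(centered Gaussian on `ℝ^q` with covariance `Σ`), and let `φ : ℝ^q → ℝ` be
(measurable and) continuously differentiable in a neighbourhood of `θ` with
gradient `V = ∇φ(θ)`.  Then `√n (φ(X_n) - φ(θ)) →ᵈ N(0, Vᵀ Σ V)`.
Multivariate convergence in distribution is expressed via the Cramér–Wold
device, and one-dimensional convergence in distribution as convergence of CDFs
at every continuity point of the limit CDF (the continuity points of the CDF of
`N(0,s)` are exactly the points with zero mass, which is every point if `s > 0`
and every `t ≠ 0` if `s = 0`). -/
theorem multivariate_delta_method
    {q : ℕ} {Ω : Type*} [MeasurableSpace Ω] (P : Measure Ω) [IsProbabilityMeasure P]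
    (θ : Fin q → ℝ) (X : ℕ → Ω → (Fin q → ℝ)) (hX_meas : ∀ n, Measurable (X n))
    (Sig : Matrix (Fin q) (Fin q) ℝ)
    (hconv : ∀ v : Fin q → ℝ, ∀ t : ℝ,
      gaussianReal 0 (∑ i, ∑ j, v i * Sig i j * v j).toNNReal {t} = 0 →
      Tendsto
        (fun n : ℕ => P {ω | ∑ i, v i * (Real.sqrt n * (X n ω i - θ i)) ≤ t})
        atTop
        (nhds (gaussianReal 0 (∑ i, ∑ j, v i * Sig i j * v j).toNNReal (Set.Iic t))))
    (φ : (Fin q → ℝ) → ℝ) (hφ_meas : Measurable φ)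
    (hφ : ∃ u ∈ nhds θ, ContDiffOn ℝ 1 φ u)
    (V : Fin q → ℝ) (hV : ∀ i, V i = fderiv ℝ φ θ (Pi.single i 1)) :
    ∀ t : ℝ,
      gaussianReal 0 (∑ i, ∑ j, V i * Sig i j * V j).toNNReal {t} = 0 →
      Tendsto (fun n : ℕ => P {ω | Real.sqrt n * (φ (X n ω) - φ θ) ≤ t})
        atTop
        (nhds (gaussianReal 0 (∑ i, ∑ j, V i * Sig i j * V j).toNNReal (Set.Iic t))) := by
  intro t ht
  classical
  set Y : ℕ → Ω → Fin q → ℝ := fun n ω i => Real.sqrt n * (X n ω i - θ i) with hYdef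
  obtain ⟨u, hu, hφu⟩ := hφ
  have hs_open : IsOpen (interior u) := isOpen_interior
  have hθs : θ ∈ interior u := mem_interior_iff_mem_nhds.mpr hu
  have hφs : ContDiffOn ℝ 1 φ (interior u) := hφu.mono interior_subset
  have hdiff : DifferentiableOn ℝ φ (interior u) := hφs.differentiableOn one_ne_zero
  have hdiffAt : ∀ z ∈ interior u, DifferentiableAt ℝ φ z := fun z hz =>
    (hdiff z hz).differentiableAt (hs_open.mem_nhds hz)
  set L := fderiv ℝ φ θ with hLdef
  -- the derivative as a sum
  have hLy : ∀ y : Fin q → ℝ, L y = ∑ i, V i * y i := by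
    intro y
    have hy : y = ∑ i, y i • (Pi.single i 1 : Fin q → ℝ) := by
      funext j
      simp [Finset.sum_apply, Pi.single_apply, mul_ite, Finset.sum_ite_eq]
    conv_lhs => rw [hy]
    rw [map_sum]
    refine Finset.sum_congr rfl fun i _ => ?_
    rw [L.map_smul, smul_eq_mul, hV i, mul_comm]
  -- mean value estimate
  have key : ∀ δ : ℝ, 0 < δ → ∃ r > 0, ∀ h : Fin q → ℝ, ‖h‖ < r →
      |φ (θ + h) - φ θ - L h| ≤ δ * ‖h‖ := by
    intro δ hδ
    have hcont : ContinuousAt (fun z => fderiv ℝ φ z) θ :=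
      (hφs.continuousOn_fderiv_of_isOpen hs_open le_rfl).continuousAt (hs_open.mem_nhds hθs)
    obtain ⟨r₁, hr₁, hball⟩ := Metric.continuousAt_iff.1 hcont δ hδ
    obtain ⟨r₂, hr₂, hsub⟩ := Metric.isOpen_iff.1 hs_open θ hθs
    refine ⟨min r₁ r₂, lt_min hr₁ hr₂, fun h hh => ?_⟩
    set B := Metric.ball θ (min r₁ r₂) with hB
    have hBs : B ⊆ interior u := fun z hz =>
      hsub (Metric.ball_subset_ball (min_le_right _ _) hz)
    have hderiv : ∀ z ∈ B, HasFDerivWithinAt (fun x => φ x - L x) (fderiv ℝ φ z - L) B z :=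
      fun z hz => (((hdiffAt z (hBs hz)).hasFDerivAt).sub L.hasFDerivAt).hasFDerivWithinAt
    have hbound : ∀ z ∈ B, ‖fderiv ℝ φ z - L‖ ≤ δ := by
      intro z hz
      have h1 : dist z θ < r₁ := lt_of_lt_of_le (Metric.mem_ball.1 hz) (min_le_left _ _)
      have h2 := hball h1
      rw [dist_eq_norm] at h2
      exact h2.le
    have hθB : θ ∈ B := Metric.mem_ball_self (lt_min hr₁ hr₂)
    have hhB : θ + h ∈ B := by
      rw [hB, Metric.mem_ball, dist_eq_norm]
      simpa using hh
    calc |φ (θ + h) - φ θ - L h|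
        = ‖(fun x => φ x - L x) (θ + h) - (fun x => φ x - L x) θ‖ := by
          simp only [Real.norm_eq_abs, map_add L θ h]
          congr 1
          ring
      _ ≤ δ * ‖θ + h - θ‖ :=
          Convex.norm_image_sub_le_of_norm_hasFDerivWithin_le hderiv hbound (convex_ball θ _) hθB hhB
      _ = δ * ‖h‖ := by rw [add_sub_cancel_left]
  -- remainder estimate
  have rem : ∀ η : ℝ, 0 < η → ∀ M : ℝ, 0 < M → ∃ N : ℕ, ∀ n, N ≤ n → ∀ ω,
      (∀ i, |Y n ω i| ≤ M) →
      |Real.sqrt n * (φ (X n ω) - φ θ) - ∑ i, V i * Y n ω i| ≤ η := by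
    intro η hη M hM
    obtain ⟨r, hr, hkey⟩ := key (η / M) (by positivity)
    obtain ⟨N, hN⟩ := exists_nat_gt ((M / r) ^ 2)
    refine ⟨N + 1, fun n hn ω hω => ?_⟩
    have hn1 : 1 ≤ n := le_trans (Nat.le_add_left 1 N) hn
    have hsq : 0 < Real.sqrt n := Real.sqrt_pos.2 (by exact_mod_cast hn1)
    set h : Fin q → ℝ := fun i => X n ω i - θ i with hh
    have hYsh : Y n ω = Real.sqrt n • h := by
      funext i; simp [hYdef, hh, smul_eq_mul]
    have hnorm : ‖Y n ω‖ ≤ M := by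
      rw [pi_norm_le_iff_of_nonneg hM.le]
      intro i
      simpa [Real.norm_eq_abs] using hω i
    have hMr : M / r < Real.sqrt n := by
      rw [Real.lt_sqrt (by positivity)]
      calc (M / r) ^ 2 < (N : ℝ) := hN
        _ ≤ (n : ℝ) := by exact_mod_cast Nat.le_of_succ_le hn
    have hhn : ‖h‖ < r := by
      have hnY : ‖Y n ω‖ = Real.sqrt n * ‖h‖ := by
        rw [hYsh, norm_smul, Real.norm_eq_abs, abs_of_pos hsq]
      have hMlt : M < r * Real.sqrt n := by
        rw [← div_lt_iff₀' hr]; exact hMr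
      nlinarith [norm_nonneg h, hnorm, hnY]
    have hXθ : X n ω = θ + h := by funext i; simp [hh]
    have hLYh : (∑ i, V i * Y n ω i) = Real.sqrt n * ∑ i, V i * h i := by
      rw [Finset.mul_sum]
      refine Finset.sum_congr rfl fun i _ => ?_
      simp only [hYdef, hh]
      ring
    rw [hXθ, hLYh]
    have habs : |Real.sqrt n * (φ (θ + h) - φ θ) - Real.sqrt n * ∑ i, V i * h i|
        = Real.sqrt n * |φ (θ + h) - φ θ - L h| := by
      rw [← mul_sub, abs_mul, abs_of_pos hsq, hLy]
    rw [habs]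
    calc Real.sqrt n * |φ (θ + h) - φ θ - L h| ≤ Real.sqrt n * (η / M * ‖h‖) :=
          mul_le_mul_of_nonneg_left (hkey h hhn) hsq.le
      _ = η / M * ‖Y n ω‖ := by
          rw [hYsh, norm_smul, Real.norm_eq_abs, abs_of_pos hsq]; ring
      _ ≤ η / M * M := mul_le_mul_of_nonneg_left hnorm (by positivity)
      _ = η := by field_simp
  -- convergence of coordinate projections
  have gconv : ∀ (i : Fin q) (c : ℝ), (c = 1 ∨ c = -1) → ∀ b : ℝ, b ≠ 0 →
      Tendsto (fun n : ℕ => (P {ω | c * Y n ω i ≤ b}).toReal) atTop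
        (𝓝 ((gaussianReal 0 (Sig i i).toNNReal (Set.Iic b)).toReal)) := by
    intro i c hc b hb
    have hvar : (∑ a, ∑ b', (Pi.single i c : Fin q → ℝ) a * Sig a b' * (Pi.single i c : Fin q → ℝ) b')
        = Sig i i := by
      rcases hc with rfl | rfl <;>
        simp [Pi.single_apply, ite_mul, mul_ite, mul_zero, zero_mul,
          Finset.sum_ite_eq, Finset.sum_ite_eq']
    have h0 := hconv (Pi.single i c) b (by rw [hvar]; exact gauss_atom _ hb)
    rw [hvar] at h0
    have hset : ∀ n : ℕ, {ω | ∑ j, (Pi.single i c : Fin q → ℝ) j *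
        (Real.sqrt n * (X n ω j - θ j)) ≤ b} = {ω | c * Y n ω i ≤ b} := by
      intro n
      ext ω
      simp [hYdef, Pi.single_apply, ite_mul, zero_mul, Finset.sum_ite_eq]
    simp only [hset] at h0
    exact (ENNReal.tendsto_toReal_iff (fun n => measure_ne_top _ _) (measure_ne_top _ _)).2 h0
  -- tightness
  have tight : ∀ ε : ℝ, 0 < ε → ∃ M : ℝ, 0 < M ∧ ∀ᶠ n in atTop,
      (P {ω | ∃ i, M < |Y n ω i|}).toReal ≤ ε := by
    intro ε hε
    have tail : ∀ i : Fin q, Tendsto (fun m : ℕ =>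
        (gaussianReal 0 (Sig i i).toNNReal (Set.Iic (-((m:ℝ)+1)))).toReal) atTop (𝓝 0) := by
      intro i
      have hinter : ⋂ m : ℕ, Set.Iic (-((m:ℝ)+1)) = ∅ := by
        ext x
        simp only [Set.mem_iInter, Set.mem_Iic, Set.mem_empty_iff_false, iff_false, not_forall,
          not_le]
        obtain ⟨m, hm⟩ := exists_nat_gt (-x - 1)
        exact ⟨m, by linarith⟩
      have h1 := tendsto_measure_iInter_atTop (μ := gaussianReal 0 (Sig i i).toNNReal)
        (s := fun m : ℕ => Set.Iic (-((m:ℝ)+1)))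
        (fun m => measurableSet_Iic.nullMeasurableSet)
        (fun a b hab => Set.Iic_subset_Iic.2 (by
          have := (Nat.cast_le (α := ℝ)).2 hab
          linarith))
        ⟨0, measure_ne_top _ _⟩
      rw [hinter, measure_empty] at h1
      have h2 := (ENNReal.tendsto_toReal_iff (fun m => measure_ne_top _ _)
        (by simp : (0 : ENNReal) ≠ ⊤)).2 h1
      simpa using h2
    have hsum : Tendsto (fun m : ℕ => ∑ i : Fin q,
        2 * (gaussianReal 0 (Sig i i).toNNReal (Set.Iic (-((m:ℝ)+1)))).toReal) atTop (𝓝 0) := by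
      have h1 := tendsto_finset_sum (Finset.univ (α := Fin q))
        (fun i _ => (tail i).const_mul (2:ℝ))
      simpa using h1
    obtain ⟨m, hm⟩ := (hsum.eventually_lt_const (half_pos hε)).exists
    refine ⟨(m:ℝ)+1, by positivity, ?_⟩
    have hconv2 : Tendsto (fun n : ℕ => ∑ i : Fin q,
        ((P {ω | (1:ℝ) * Y n ω i ≤ -((m:ℝ)+1)}).toReal +
          (P {ω | (-1:ℝ) * Y n ω i ≤ -((m:ℝ)+1)}).toReal)) atTop
        (𝓝 (∑ i : Fin q,
          2 * (gaussianReal 0 (Sig i i).toNNReal (Set.Iic (-((m:ℝ)+1)))).toReal)) := by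
      refine tendsto_finset_sum _ fun i _ => ?_
      have hbne : (-((m:ℝ)+1)) ≠ 0 := by
        have : (0:ℝ) ≤ m := Nat.cast_nonneg m
        intro hcontra
        linarith [hcontra]
      have h1 := gconv i 1 (Or.inl rfl) (-((m:ℝ)+1)) hbne
      have h2 := gconv i (-1) (Or.inr rfl) (-((m:ℝ)+1)) hbne
      have := h1.add h2
      convert this using 2
      ring
    have hlt : (∑ i : Fin q,
        2 * (gaussianReal 0 (Sig i i).toNNReal (Set.Iic (-((m:ℝ)+1)))).toReal) < ε := by
      linarith
    filter_upwards [hconv2.eventually_le_const hlt] with n hn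
    refine le_trans ?_ hn
    have hsub : {ω | ∃ i, (m:ℝ)+1 < |Y n ω i|} ⊆
        ⋃ i : Fin q, ({ω | (1:ℝ) * Y n ω i ≤ -((m:ℝ)+1)} ∪
          {ω | (-1:ℝ) * Y n ω i ≤ -((m:ℝ)+1)}) := by
      rintro ω ⟨i, hi⟩
      refine Set.mem_iUnion.2 ⟨i, ?_⟩
      rcases le_or_gt 0 (Y n ω i) with hY | hY
      · right
        simp only [Set.mem_setOf_eq, neg_one_mul]
        rw [abs_of_nonneg hY] at hi
        linarith
      · left
        simp only [Set.mem_setOf_eq, one_mul]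
        rw [abs_of_neg hY] at hi
        linarith
    calc (P {ω | ∃ i, (m:ℝ)+1 < |Y n ω i|}).toReal
        ≤ (P (⋃ i : Fin q, ({ω | (1:ℝ) * Y n ω i ≤ -((m:ℝ)+1)} ∪
            {ω | (-1:ℝ) * Y n ω i ≤ -((m:ℝ)+1)}))).toReal :=
          ENNReal.toReal_mono (measure_ne_top _ _) (measure_mono hsub)
      _ ≤ ∑ i : Fin q, ((P {ω | (1:ℝ) * Y n ω i ≤ -((m:ℝ)+1)}).toReal +
            (P {ω | (-1:ℝ) * Y n ω i ≤ -((m:ℝ)+1)}).toReal) :=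
          toReal_meas_iUnion2_le P _ _
  -- convergence of the V-projection
  have Vconv : ∀ b : ℝ, b ≠ 0 →
      Tendsto (fun n : ℕ => (P {ω | ∑ i, V i * Y n ω i ≤ b}).toReal) atTop
        (𝓝 ((gaussianReal 0 (∑ i, ∑ j, V i * Sig i j * V j).toNNReal (Set.Iic b)).toReal)) := by
    intro b hb
    have h0 := hconv V b (gauss_atom _ hb)
    exact (ENNReal.tendsto_toReal_iff (fun n => measure_ne_top _ _) (measure_ne_top _ _)).2 h0
  -- main argument
  set μV := gaussianReal 0 (∑ i, ∑ j, V i * Sig i j * V j).toNNReal with hμV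
  rw [← ENNReal.tendsto_toReal_iff (fun n => measure_ne_top _ _) (measure_ne_top _ _)]
  rw [Metric.tendsto_nhds]
  intro ε hε
  obtain ⟨η₀, hη₀, hR, hL2⟩ := cdf_cont μV ht (by positivity : (0:ℝ) < ε/4)
  set η : ℝ := if t + η₀ = 0 ∨ t - η₀ = 0 then η₀ / 2 else η₀ with hηdef
  have hηP : 0 < η ∧ η ≤ η₀ ∧ t + η ≠ 0 ∧ t - η ≠ 0 := by
    by_cases hbad : t + η₀ = 0 ∨ t - η₀ = 0
    · rw [hηdef, if_pos hbad]
      refine ⟨by linarith, by linarith, ?_, ?_⟩ <;>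
        rcases hbad with h | h <;> intro hc <;> linarith
    · rw [hηdef, if_neg hbad]
      push_neg at hbad
      exact ⟨hη₀, le_rfl, hbad.1, hbad.2⟩
  obtain ⟨hη1, hη2, hη3, hη4⟩ := hηP
  have hGmono : ∀ a b : ℝ, a ≤ b → (μV (Set.Iic a)).toReal ≤ (μV (Set.Iic b)).toReal :=
    fun a b hab => ENNReal.toReal_mono (measure_ne_top _ _)
      (measure_mono (Set.Iic_subset_Iic.2 hab))
  have hRη : (μV (Set.Iic (t+η))).toReal ≤ (μV (Set.Iic t)).toReal + ε/4 :=
    le_trans (hGmono _ _ (by linarith)) hR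
  have hLη : (μV (Set.Iic t)).toReal ≤ (μV (Set.Iic (t-η))).toReal + ε/4 :=
    le_trans hL2 (by linarith [hGmono (t-η₀) (t-η) (by linarith)])
  obtain ⟨M, hM, htight⟩ := tight (ε/4) (by positivity)
  obtain ⟨N₀, hrem⟩ := rem η hη1 M hM
  have e1 := Metric.tendsto_nhds.1 (Vconv (t+η) hη3) (ε/4) (by positivity)
  have e2 := Metric.tendsto_nhds.1 (Vconv (t-η) hη4) (ε/4) (by positivity)
  filter_upwards [e1, e2, htight, eventually_ge_atTop N₀] with n h1 h2 h3 h4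
  rw [Real.dist_eq, abs_sub_lt_iff] at h1 h2 ⊢
  have hup : (P {ω | Real.sqrt n * (φ (X n ω) - φ θ) ≤ t}).toReal ≤
      (P {ω | ∑ i, V i * Y n ω i ≤ t+η}).toReal + (P {ω | ∃ i, M < |Y n ω i|}).toReal := by
    apply toReal_meas_le_add
    intro ω hω
    by_cases hB : ∃ i, M < |Y n ω i|
    · exact Or.inr hB
    · left
      push_neg at hB
      have habs := abs_le.1 (hrem n h4 ω hB)
      simp only [Set.mem_setOf_eq] at hω ⊢
      linarith [habs.1]
  have hlow : (P {ω | ∑ i, V i * Y n ω i ≤ t-η}).toReal ≤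
      (P {ω | Real.sqrt n * (φ (X n ω) - φ θ) ≤ t}).toReal +
        (P {ω | ∃ i, M < |Y n ω i|}).toReal := by
    apply toReal_meas_le_add
    intro ω hω
    by_cases hB : ∃ i, M < |Y n ω i|
    · exact Or.inr hB
    · left
      push_neg at hB
      have habs := abs_le.1 (hrem n h4 ω hB)
      simp only [Set.mem_setOf_eq] at hω ⊢
      linarith [habs.2]
  constructor
  · linarith [h1.1, h3, hRη]
  · linarith [h2.2, h3, hLη]
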